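/- Let Λ be the stochastic 4×4 matrix over states {(B,B),(B,R),(R,B),(R,R)} of the battle-of-the-sexes embedded Markov chain with common population size N ≥ 2 and selection strength η > 0, whose off-diagonal entries are Λ₁₂ = c·ρ(-2η/(1+2η)), Λ₁₃ = c·ρ(-η/(1+η)), Λ₂₁ = c·ρ(2η), Λ₂₄ = c·ρ(2η), Λ₃₁ = c·ρ(η), Λ₃₄ = c·ρ(η), Λ₄₂ = c·ρ(-2η/(1+2η)), Λ₄₃ = c·ρ(-η/(1+η)), all other off-diagonal entries zero, diagonal entries chosen so each row sums to 1, where ρ(s) = (1 - 1/(1+s))/(1 - 1/(1+s)^N) and c > 0 is a constant. Then the vector λ proportional to (1, (1+2η)^{-(N-1)}, (1+η)^{-(N-1)}, 1) satisfies λΛ = λ. -/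

import Mathlib

/-- Moran fixation probability. -/
noncomputable def moranRho (N : ℕ) (t : ℝ) : ℝ :=
  (1 - 1 / (1 + t)) / (1 - 1 / (1 + t) ^ N)

/-- Off-diagonal transition rates of the battle-of-the-sexes embedded chain. -/
noncomputable def bosOff (N : ℕ) (η c : ℝ) : Matrix (Fin 4) (Fin 4) ℝ :=
  !![0, c * moranRho N (-2 * η / (1 + 2 * η)), c * moranRho N (-η / (1 + η)), 0;
     c * moranRho N (2 * η), 0, 0, c * moranRho N (2 * η);
     c * moranRho N η, 0, 0, c * moranRho N η;
     0, c * moranRho N (-2 * η / (1 + 2 * η)), c * moranRho N (-η / (1 + η)), 0]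

/-- The embedded Markov matrix: diagonal entries make each row sum to one. -/
noncomputable def bosLambda (N : ℕ) (η c : ℝ) : Matrix (Fin 4) (Fin 4) ℝ :=
  fun i j => if i = j then 1 - ∑ k, bosOff N η c i k else bosOff N η c i j

lemma rho_rel (N : ℕ) (hN : 1 ≤ N) (s : ℝ) (hs : 0 < s) :
    moranRho N (-s / (1 + s)) = ((1 + s) ^ (N - 1))⁻¹ * moranRho N s := by
  obtain ⟨M, rfl⟩ : ∃ M, N = M + 1 := ⟨N - 1, by omega⟩
  have hu : (1 : ℝ) < 1 + s := by linarith
  have hu0 : (1 + s) ≠ 0 := by positivity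
  have hP0 : (1 + s) ^ M ≠ 0 := by positivity
  have huN : (1 : ℝ) < (1 + s) ^ (M + 1) := one_lt_pow₀ hu (by omega)
  have huN0 : ((1 + s) : ℝ) ^ (M + 1) ≠ 0 := by positivity
  have huN1 : (1 + s) ^ (M + 1) - 1 ≠ 0 := by intro h; linarith
  have hd1 : 1 - (1 + s) ^ (M + 1) ≠ 0 := by intro h; linarith
  have hd2 : 1 - 1 / (1 + s) ^ (M + 1) ≠ 0 := by
    have h1 : 1 / (1 + s) ^ (M + 1) < 1 := by
      rw [div_lt_one (by positivity)]; exact huN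
    intro h; linarith
  have h1 : 1 + (-s / (1 + s)) = (1 + s)⁻¹ := by field_simp; ring
  have L : moranRho (M + 1) (-s / (1 + s)) = s / ((1 + s) ^ (M + 1) - 1) := by
    unfold moranRho
    rw [h1, inv_pow, one_div, inv_inv, one_div, inv_inv,
      div_eq_div_iff hd1 huN1]
    ring
  have R : moranRho (M + 1) s = s * (1 + s) ^ M / ((1 + s) ^ (M + 1) - 1) := by
    unfold moranRho
    rw [div_eq_div_iff hd2 huN1]
    field_simp
    ring
  rw [L, R, Nat.add_sub_cancel]
  field_simp

theorem bos_stationary (N : ℕ) (hN : 2 ≤ N) (η : ℝ) (hη : 0 < η) (c : ℝ) (hc : 0 < c) :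
    let v : Fin 4 → ℝ :=
      ![1, ((1 + 2 * η) ^ (N - 1))⁻¹, ((1 + η) ^ (N - 1))⁻¹, 1]
    ∀ j, (∑ i, v i * bosLambda N η c i j) = v j := by
  intro v j
  have hA : moranRho N (-2 * η / (1 + 2 * η))
      = ((1 + 2 * η) ^ (N - 1))⁻¹ * moranRho N (2 * η) := by
    have h := rho_rel N (by omega) (2 * η) (by linarith)
    rw [← h]; norm_num
  have hB : moranRho N (-η / (1 + η))
      = ((1 + η) ^ (N - 1))⁻¹ * moranRho N η := rho_rel N (by omega) η hη
  simp only [bosLambda, bosOff, hA, hB]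
  generalize moranRho N (2 * η) = A
  generalize moranRho N η = B
  fin_cases j <;>
    simp [v, Fin.sum_univ_four] <;> ring
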